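/- Let B be the bilinear form on ℚ² with Gram matrix [[-2,4],[4,-2]]. Suppose D ∈ ℤ² has nonnegative coordinates and D = P + N with P, N ∈ ℚ², where B(P,C₁) ≥ 0, B(P,C₂) ≥ 0, N is a nonnegative rational linear combination of C₁ and C₂, B(P,N) = 0, and the support of N (the set of Cᵢ appearing with positive coefficient in N) spans a negative definite sublattice. Then P and N have integer coordinates. -/

import Mathlib

/-- The intersection form with Gram matrix [[-2,4],[4,-2]] on ℚ². -/
def Bq (x y : ℚ × ℚ) : ℚ :=
  -2 * x.1 * y.1 + 4 * x.1 * y.2 + 4 * x.2 * y.1 - 2 * x.2 * y.2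

theorem stmt6 (m n : ℤ) (hm : 0 ≤ m) (hn : 0 ≤ n)
    (P N : ℚ × ℚ) (hsum : P + N = ((m : ℚ), (n : ℚ)))
    (hP1 : Bq P (1, 0) ≥ 0) (hP2 : Bq P (0, 1) ≥ 0)
    (c₁ c₂ : ℚ) (hc₁ : 0 ≤ c₁) (hc₂ : 0 ≤ c₂)
    (hN : N = c₁ • ((1 : ℚ), (0 : ℚ)) + c₂ • ((0 : ℚ), (1 : ℚ)))
    (hPN : Bq P N = 0)
    (hnegdef : ∀ a b : ℚ, (c₁ = 0 → a = 0) → (c₂ = 0 → b = 0) →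
      (a, b) ≠ ((0 : ℚ), (0 : ℚ)) → Bq (a, b) (a, b) < 0) :
    (∃ p q : ℤ, P = ((p : ℚ), (q : ℚ))) ∧ (∃ p q : ℤ, N = ((p : ℚ), (q : ℚ))) := by
  subst hN
  have h1 : P.1 = (m : ℚ) - c₁ := by
    have := congrArg Prod.fst hsum
    simp at this
    linarith
  have h2 : P.2 = (n : ℚ) - c₂ := by
    have := congrArg Prod.snd hsum
    simp at this
    linarith
  have hnot : ¬ (c₁ ≠ 0 ∧ c₂ ≠ 0) := by
    rintro ⟨ha, hb⟩
    have := hnegdef 1 1 (fun h => absurd h ha) (fun h => absurd h hb) (by norm_num)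
    norm_num [Bq] at this
  have hPN' : c₁ * (-2 * P.1 + 4 * P.2) + c₂ * (4 * P.1 - 2 * P.2) = 0 := by
    simp only [Bq, Prod.smul_fst, Prod.smul_snd, Prod.fst_add, Prod.snd_add, smul_eq_mul] at hPN
    ring_nf at hPN ⊢
    linarith
  rcases eq_or_ne c₁ 0 with hc1 | hc1
  · rcases eq_or_ne c₂ 0 with hc2 | hc2
    · subst hc1; subst hc2
      constructor
      · exact ⟨m, n, by ext <;> simp [h1, h2]⟩
      · exact ⟨0, 0, by ext <;> simp⟩
    · -- c₁ = 0, c₂ ≠ 0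
      subst hc1
      have hP2' : Bq P (0, 1) = 4 * P.1 - 2 * P.2 := by simp only [Bq]; ring
      have hz : 4 * P.1 - 2 * P.2 = 0 := by
        rcases lt_or_eq_of_le hc₂ with h | h
        · nlinarith
        · exact absurd h.symm hc2
      have hP2eq : P.2 = 2 * P.1 := by linarith
      have hc2v : c₂ = (n : ℚ) - 2 * m := by
        rw [h2, h1] at hP2eq; linarith [hP2eq]
      constructor
      · exact ⟨m, 2 * m, by
          ext
          · simpa using h1
          · rw [h2, hc2v]; push_cast; ring⟩
      · exact ⟨0, n - 2 * m, by
          ext <;> simp [hc2v] <;> push_cast <;> ring⟩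
  · have hc2 : c₂ = 0 := by
      by_contra hb
      exact hnot ⟨hc1, hb⟩
    subst hc2
    have hz : -2 * P.1 + 4 * P.2 = 0 := by
      rcases lt_or_eq_of_le hc₁ with h | h
      · nlinarith
      · exact absurd h.symm hc1
    have hP1eq : P.1 = 2 * P.2 := by linarith
    have hc1v : c₁ = (m : ℚ) - 2 * n := by
      rw [h2, h1] at hP1eq; linarith [hP1eq]
    constructor
    · exact ⟨2 * n, n, by
        ext
        · rw [h1, hc1v]; push_cast; ring
        · simpa using h2⟩
    · exact ⟨m - 2 * n, 0, by
        ext <;> simp [hc1v] <;> push_cast <;> ring⟩
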